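/- Let Q be a minimal 2CQ, let Q' be a type-2 restriction of Q, and let Q'' be either another type-2 restriction of Q not isomorphic to Q' (i.e., adding an atom with a different relation name) or a member of the reduced set of type-1/3/4 restrictions of Q. Then: (1) Q' is minimal; (2) there is no homomorphism from Q' to Q; and (3) Q' and Q'' are incomparable, i.e., Q' ⋢ Q'' and Q'' ⋢ Q'. -/

import Mathlib

/-- A relational schema: a finite set of relation names, each with an arity.
Variables are taken to be natural numbers (a countably infinite set). -/
structure Schema where
  Rel : Type
  finRel : Finite Rel
  ar : Rel → ℕ

/-- An atom over schema `σ`: a relation name together with a tuple of variables. -/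
abbrev Atom (σ : Schema) := Σ R : σ.Rel, Fin (σ.ar R) → ℕ

/-- A conjunctive query of arity `α` over schema `σ`: a head tuple of variables and
a finite set of body atoms, such that every head variable occurs in some body atom. -/
structure CQ (σ : Schema) (α : ℕ) where
  head : Fin α → ℕ
  body : Set (Atom σ)
  finite_body : body.Finite
  head_occurs : ∀ i : Fin α, ∃ a ∈ body, ∃ j, a.2 j = head i

/-- The set of variables occurring in a CQ. -/
def CQ.vars {σ : Schema} {α : ℕ} (Q : CQ σ α) : Set ℕ :=
  {v | ∃ a ∈ Q.body, ∃ j, a.2 j = v}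

/-- `h` is a homomorphism from `Q₂` to `Q₁`: it sends every atom `R(x̄)` of `Q₂` to an
atom `R(h(x̄))` of `Q₁`, and `h(head Q₂) = head Q₁`. -/
def CQHom {σ : Schema} {α : ℕ} (Q₂ Q₁ : CQ σ α) (h : ℕ → ℕ) : Prop :=
  (∀ a ∈ Q₂.body, (⟨a.1, h ∘ a.2⟩ : Atom σ) ∈ Q₁.body) ∧ h ∘ Q₂.head = Q₁.head

/-- Containment `Q₁ ⊑ Q₂`: there is a homomorphism from `Q₂` to `Q₁`. -/
def Contained {σ : Schema} {α : ℕ} (Q₁ Q₂ : CQ σ α) : Prop :=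
  ∃ h : ℕ → ℕ, CQHom Q₂ Q₁ h

/-- Equivalence `Q₁ ≡ Q₂`: containment in both directions. -/
def CQEquiv {σ : Schema} {α : ℕ} (Q₁ Q₂ : CQ σ α) : Prop :=
  Contained Q₁ Q₂ ∧ Contained Q₂ Q₁

/-- Maximal containment `Q₁ ⊑ₘ Q₂`. -/
def MaxContained {σ : Schema} {α : ℕ} (Q₁ Q₂ : CQ σ α) : Prop :=
  Contained Q₁ Q₂ ∧ ¬ Contained Q₂ Q₁ ∧
  ∀ Q : CQ σ α, Contained Q₁ Q → Contained Q Q₂ → CQEquiv Q Q₁ ∨ CQEquiv Q Q₂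

/-- A 2CQ: each relation name occurs in at most two body atoms. -/
def Is2CQ {σ : Schema} {α : ℕ} (Q : CQ σ α) : Prop :=
  ∀ T : σ.Rel, {a ∈ Q.body | a.1 = T}.ncard ≤ 2

/-- A CQ is minimal if no CQ with the same head and a proper subset of its body
atoms is equivalent to it. -/
def CQMinimal {σ : Schema} {α : ℕ} (Q : CQ σ α) : Prop :=
  ∀ Q' : CQ σ α, Q'.head = Q.head → Q'.body ⊂ Q.body → ¬ CQEquiv Q' Q

/-- `C` is a core of `Q`: a minimal CQ equivalent to `Q`. -/
def IsCoreOf {σ : Schema} {α : ℕ} (C Q : CQ σ α) : Prop :=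
  CQMinimal C ∧ CQEquiv C Q

/-- Type-1 restriction: identify one variable `y` with another, i.e. apply a
substitution `h` that is the identity except on `y`, where `h y` must be a
distinguished variable if `y` is. -/
def IsType1Restriction {σ : Schema} {α : ℕ} (Q R : CQ σ α) : Prop :=
  ∃ h : ℕ → ℕ, ∃ y : ℕ,
    y ∈ Q.vars ∧ h y ≠ y ∧ h y ∈ Q.vars ∧ (∀ v, v ≠ y → h v = v) ∧
    ((∃ i, Q.head i = y) → ∃ i, Q.head i = h y) ∧
    R.head = h ∘ Q.head ∧
    R.body = {b | ∃ a ∈ Q.body, b = (⟨a.1, h ∘ a.2⟩ : Atom σ)}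

/-- Type-2 restriction adding atom `T(ȳ)` for relation name `T` (which occurs in no
atom of `Q`), where `ȳ` is a tuple of distinct fresh variables. -/
def IsType2RestrictionWith {σ : Schema} {α : ℕ} (Q R : CQ σ α) (T : σ.Rel) : Prop :=
  (∀ a ∈ Q.body, a.1 ≠ T) ∧
  ∃ y : Fin (σ.ar T) → ℕ, Function.Injective y ∧ (∀ j, y j ∉ Q.vars) ∧
    R.head = Q.head ∧ R.body = Q.body ∪ {(⟨T, y⟩ : Atom σ)}

/-- Type-2 restriction: add a fresh atom on a relation name not occurring in `Q`. -/
def IsType2Restriction {σ : Schema} {α : ℕ} (Q R : CQ σ α) : Prop :=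
  ∃ T : σ.Rel, IsType2RestrictionWith Q R T

/-- Type-3 restriction: add an atom `T(h(ȳ))` where `T` occurs in exactly one atom of
`Q`, `ȳ` is a tuple of distinct fresh variables with variable set `Y`, and
`h : Y → vars(Q) ∪ Y` is the identity except on exactly one variable. -/
def IsType3Restriction {σ : Schema} {α : ℕ} (Q R : CQ σ α) : Prop :=
  ∃ T : σ.Rel, {a ∈ Q.body | a.1 = T}.ncard = 1 ∧
  ∃ y : Fin (σ.ar T) → ℕ, Function.Injective y ∧ (∀ j, y j ∉ Q.vars) ∧
  ∃ h : ℕ → ℕ, ∃ j₀ : Fin (σ.ar T),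
    h (y j₀) ≠ y j₀ ∧ h (y j₀) ∈ Q.vars ∪ Set.range y ∧
    (∀ j, j ≠ j₀ → h (y j) = y j) ∧
    R.head = Q.head ∧ R.body = Q.body ∪ {(⟨T, h ∘ y⟩ : Atom σ)}

/-- Type-4 restriction: add two atoms `T₁(h(ȳ₁))` and `T₂(ȳ₂)` where `T₁ ≠ T₂` each
occur in exactly one atom of `Q`, `ȳ₁, ȳ₂` are tuples of distinct fresh variables
(with variable sets `Y₁, Y₂`), and `h : Y₁ → Y₁ ∪ Y₂` is the identity except on
exactly one variable, which is mapped to a variable of `Y₂`. -/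
def IsType4Restriction {σ : Schema} {α : ℕ} (Q R : CQ σ α) : Prop :=
  ∃ T₁ T₂ : σ.Rel, T₁ ≠ T₂ ∧
    {a ∈ Q.body | a.1 = T₁}.ncard = 1 ∧ {a ∈ Q.body | a.1 = T₂}.ncard = 1 ∧
  ∃ y₁ : Fin (σ.ar T₁) → ℕ, ∃ y₂ : Fin (σ.ar T₂) → ℕ,
    Function.Injective y₁ ∧ Function.Injective y₂ ∧
    (∀ j, y₁ j ∉ Q.vars) ∧ (∀ j, y₂ j ∉ Q.vars) ∧
    (∀ j k, y₁ j ≠ y₂ k) ∧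
  ∃ h : ℕ → ℕ, ∃ j₀ : Fin (σ.ar T₁),
    (∃ k, h (y₁ j₀) = y₂ k) ∧ (∀ j, j ≠ j₀ → h (y₁ j) = y₁ j) ∧
    R.head = Q.head ∧
    R.body = Q.body ∪ {(⟨T₁, h ∘ y₁⟩ : Atom σ), (⟨T₂, y₂⟩ : Atom σ)}

/-- A restriction of type 1, 3 or 4. -/
def IsType134Restriction {σ : Schema} {α : ℕ} (Q R : CQ σ α) : Prop :=
  IsType1Restriction Q R ∨ IsType3Restriction Q R ∨ IsType4Restriction Q R

/-- A restriction (of any of the four types). -/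
def IsRestriction {σ : Schema} {α : ℕ} (Q R : CQ σ α) : Prop :=
  IsType1Restriction Q R ∨ IsType2Restriction Q R ∨
  IsType3Restriction Q R ∨ IsType4Restriction Q R

/-- `Q'` belongs to the reduced set of type-1/3/4 restrictions of `Q`: `Q'` is the
core of a type-1/3/4 restriction of `Q`, `Q ⋢ Q'`, and there is no type-1/3/4
restriction `Q''` of `Q` not equivalent to `Q'` with `Q' ⊑ Q''`. -/
def InReduced134 {σ : Schema} {α : ℕ} (Q Q' : CQ σ α) : Prop :=
  (∃ P : CQ σ α, IsType134Restriction Q P ∧ IsCoreOf Q' P) ∧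
  ¬ Contained Q Q' ∧
  ¬ ∃ Q'' : CQ σ α, IsType134Restriction Q Q'' ∧ ¬ CQEquiv Q'' Q' ∧ Contained Q' Q''

/-- `Q'` belongs to `RR(Q)`, the reduced set of restrictions of `Q`: the union of the
type-2 restrictions of `Q` and the reduced set of type-1/3/4 restrictions of `Q`. -/
def InRR {σ : Schema} {α : ℕ} (Q Q' : CQ σ α) : Prop :=
  IsType2Restriction Q Q' ∨ InReduced134 Q Q'

/-- A type-1/3/4 restriction of a query with no `T`-atoms has no `T`-atoms. -/
lemma noT_of_type134 {σ : Schema} {α : ℕ} (Q P : CQ σ α) (T : σ.Rel)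
    (hQ : ∀ a ∈ Q.body, a.1 ≠ T) (h : IsType134Restriction Q P) :
    ∀ a ∈ P.body, a.1 ≠ T := by
  rcases h with h1 | h3 | h4
  · obtain ⟨f, y, -, -, -, -, -, -, hbody⟩ := h1
    intro a ha
    rw [hbody] at ha
    obtain ⟨b, hb, rfl⟩ := ha
    exact hQ b hb
  · obtain ⟨T₃, hcard, y, -, -, f, j₀, -, -, -, -, hbody⟩ := h3
    obtain ⟨b, hb, hbT⟩ := Set.nonempty_of_ncard_ne_zero (s := {a ∈ Q.body | a.1 = T₃})
      (by rw [hcard]; exact one_ne_zero)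
    intro a ha
    rw [hbody] at ha
    rcases ha with ha | ha
    · exact hQ a ha
    · rw [Set.mem_singleton_iff] at ha
      subst ha
      exact hbT ▸ hQ b hb
  · obtain ⟨T₁, T₂, -, hc1, hc2, y₁, y₂, -, -, -, -, -, f, j₀, -, -, -, hbody⟩ := h4
    obtain ⟨b₁, hb₁, hb₁T⟩ := Set.nonempty_of_ncard_ne_zero (s := {a ∈ Q.body | a.1 = T₁})
      (by rw [hc1]; exact one_ne_zero)
    obtain ⟨b₂, hb₂, hb₂T⟩ := Set.nonempty_of_ncard_ne_zero (s := {a ∈ Q.body | a.1 = T₂})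
      (by rw [hc2]; exact one_ne_zero)
    intro a ha
    rw [hbody] at ha
    rcases ha with ha | ha
    · exact hQ a ha
    · rcases ha with ha | ha
      · subst ha; exact hb₁T ▸ hQ b₁ hb₁
      · rw [Set.mem_singleton_iff] at ha; subst ha; exact hb₂T ▸ hQ b₂ hb₂

theorem stmt_14 {σ : Schema} {α : ℕ} (Q : CQ σ α) (hQ2 : Is2CQ Q) (hQmin : CQMinimal Q)
    (Q' Q'' : CQ σ α) (T : σ.Rel) (hQ' : IsType2RestrictionWith Q Q' T)
    (hQ'' : (∃ T' : σ.Rel, T' ≠ T ∧ IsType2RestrictionWith Q Q'' T') ∨ InReduced134 Q Q'') :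
    CQMinimal Q' ∧
    (¬ ∃ h : ℕ → ℕ, CQHom Q' Q h) ∧
    (¬ Contained Q' Q'' ∧ ¬ Contained Q'' Q') := by
  obtain ⟨hTnot, y, hyInj, hyFresh, hhead, hbody⟩ := hQ'
  have hTmem : (⟨T, y⟩ : Atom σ) ∈ Q'.body := by
    rw [hbody]; exact Set.mem_union_right _ rfl
  -- membership analysis in Q'.body
  have hmemQ' : ∀ a : Atom σ, a ∈ Q'.body → a.1 ≠ T → a ∈ Q.body := by
    intro a ha haT
    rw [hbody] at ha
    rcases ha with ha | ha
    · exact ha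
    · rw [Set.mem_singleton_iff] at ha
      exact absurd (congrArg Sigma.fst ha) haT
  refine ⟨?_, ?_, ?_⟩
  · -- minimality of Q'
    intro Q₀ hhead0 hsub heqv
    obtain ⟨⟨f, hf, hfh⟩, -⟩ := heqv
    -- f : Q' → Q₀
    have hfhead : ∀ i, f (Q.head i) = Q.head i := by
      intro i
      have := congrFun hfh i
      simpa [hhead, hhead0] using this
    have hTmem0 : (⟨T, y⟩ : Atom σ) ∈ Q₀.body := by
      have h1 : (⟨T, f ∘ y⟩ : Atom σ) ∈ Q₀.body := hf ⟨T, y⟩ hTmem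
      have h2 : (⟨T, f ∘ y⟩ : Atom σ) ∈ Q'.body := hsub.subset h1
      rw [hbody] at h2
      rcases h2 with h2 | h2
      · exact absurd rfl (hTnot _ h2)
      · rw [Set.mem_singleton_iff] at h2
        rwa [h2] at h1
    -- the stripped body
    set B₀ : Set (Atom σ) := {a ∈ Q₀.body | a.1 ≠ T} with hB₀
    have hB₀sub : B₀ ⊆ Q.body := fun a ha => hmemQ' a (hsub.subset ha.1) ha.2
    have himg : ∀ a ∈ Q.body, (⟨a.1, f ∘ a.2⟩ : Atom σ) ∈ B₀ := by
      intro a ha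
      exact ⟨hf a (hbody ▸ Set.mem_union_left _ ha), hTnot a ha⟩
    have hQb : ∀ i : Fin α, ∃ a ∈ B₀, ∃ j, a.2 j = Q.head i := by
      intro i
      obtain ⟨a, ha, j, haj⟩ := Q.head_occurs i
      exact ⟨⟨a.1, f ∘ a.2⟩, himg a ha, j, by simp [haj, hfhead i]⟩
    let Qb : CQ σ α := ⟨Q.head, B₀, Q₀.finite_body.subset (Set.sep_subset _ _), hQb⟩
    have hssub : B₀ ⊂ Q.body := by
      refine ⟨hB₀sub, fun habs => ?_⟩
      obtain ⟨x, hx, hxn⟩ := Set.exists_of_ssubset hsub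
      have hxT : x ≠ ⟨T, y⟩ := fun h => hxn (h ▸ hTmem0)
      have hxQ : x ∈ Q.body := by
        rw [hbody] at hx
        rcases hx with hx | hx
        · exact hx
        · exact absurd hx hxT
      exact hxn (habs hxQ).1
    refine hQmin Qb rfl hssub ⟨⟨f, himg, funext hfhead⟩, ⟨id, fun a ha => by
      simpa using hB₀sub ha, by simp [Qb]⟩⟩
  · -- no hom from Q' to Q
    rintro ⟨g, hg, -⟩
    exact hTnot _ (hg ⟨T, y⟩ hTmem) rfl
  · -- incomparability with Q''
    rcases hQ'' with ⟨T', hT'T, hT'not, y', hy'Inj, hy'Fresh, hhead', hbody'⟩ | hred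
    · have hT'mem : (⟨T', y'⟩ : Atom σ) ∈ Q''.body := by
        rw [hbody']; exact Set.mem_union_right _ rfl
      constructor
      · rintro ⟨g, hg, -⟩
        have h1 : (⟨T', g ∘ y'⟩ : Atom σ) ∈ Q'.body := hg ⟨T', y'⟩ hT'mem
        have h2 : (⟨T', g ∘ y'⟩ : Atom σ) ∈ Q.body := hmemQ' _ h1 hT'T
        exact hT'not _ h2 rfl
      · rintro ⟨g, hg, -⟩
        have h1 : (⟨T, g ∘ y⟩ : Atom σ) ∈ Q''.body := hg ⟨T, y⟩ hTmem
        rw [hbody'] at h1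
        rcases h1 with h1 | h1
        · exact hTnot _ h1 rfl
        · rw [Set.mem_singleton_iff] at h1
          exact hT'T (congrArg Sigma.fst h1).symm
    · obtain ⟨⟨P, hP134, hPmin, hPeq⟩, hnotQ, -⟩ := hred
      have hPnoT : ∀ a ∈ P.body, a.1 ≠ T := noT_of_type134 Q P T hTnot hP134
      have hQ''noT : ∀ a ∈ Q''.body, a.1 ≠ T := by
        obtain ⟨g, hg, -⟩ := hPeq.2
        intro a ha
        exact hPnoT ⟨a.1, g ∘ a.2⟩ (hg a ha)
      constructor
      · -- Contained Q' Q'' would give Contained Q Q''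
        rintro ⟨g, hg, hgh⟩
        refine hnotQ ⟨g, fun a ha => ?_, by rw [hgh, hhead]⟩
        exact hmemQ' _ (hg a ha) (hQ''noT a ha)
      · rintro ⟨g, hg, -⟩
        exact hQ''noT _ (hg ⟨T, y⟩ hTmem) rfl
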